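/- Let n be a finite linearly ordered index type and consider the Lie algebra of real n×n matrices with the commutator bracket [M,N] = MN − NM. Let L(M) denote the strictly lower triangular part of M (L(M)_{ij} = M_{ij} if i > j, else 0), and define the projection π(M) := L(M) − L(M)ᵀ, which is the projection onto the skew-symmetric matrices along the upper triangular matrices. Then for all real matrices M, N: [π M, π N] + π[M,N] = π([π M, N] + [M, π N]). -/

import Mathlib

/-- **Proposition (the QR projection is Rota–Baxter of weight −1).**
Let `n` be a finite linearly ordered index type and consider the Lie algebra of real `n × n`
matrices with the commutator bracket `[M,N] = MN − NM`. Let `L M` denote the strictly lower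
triangular part of `M`, and define the projection `π M := L M − (L M)ᵀ`, which is the
projection onto the skew-symmetric matrices along the upper triangular matrices. Then for all
real matrices `M, N`: `[π M, π N] + π[M,N] = π([π M, N] + [M, π N])`. -/
theorem qr_projection_rotaBaxter {n : Type*} [Fintype n] [DecidableEq n] [LinearOrder n]
    (L : Matrix n n ℝ → Matrix n n ℝ)
    (hL : ∀ (M : Matrix n n ℝ) (i j : n), L M i j = if j < i then M i j else 0)
    (π : Matrix n n ℝ → Matrix n n ℝ)
    (hπ : ∀ M : Matrix n n ℝ, π M = L M - (L M).transpose) :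
    ∀ M N : Matrix n n ℝ, ⁅π M, π N⁆ + π ⁅M, N⁆ = π (⁅π M, N⁆ + ⁅M, π N⁆) := by
  have hπ' : ∀ (A : Matrix n n ℝ) (i j : n),
      π A i j = (if j < i then A i j else 0) - (if i < j then A j i else 0) := by
    intro A i j
    rw [hπ]
    simp [Matrix.sub_apply, Matrix.transpose_apply, hL]
  have hadd : ∀ A B : Matrix n n ℝ, π (A + B) = π A + π B := by
    intro A B; ext i j
    simp only [hπ', Matrix.add_apply]
    split_ifs <;> ring
  have hsub : ∀ A B : Matrix n n ℝ, π (A - B) = π A - π B := by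
    intro A B; ext i j
    simp only [hπ', Matrix.sub_apply]
    split_ifs <;> ring
  have hskew : ∀ A : Matrix n n ℝ, A.transpose = -A → π A = A := by
    intro A h
    have h' : ∀ i j, A j i = -A i j := by
      intro i j
      have := congrFun (congrFun h i) j
      simpa [Matrix.transpose_apply] using this
    ext i j
    rw [hπ']
    rcases lt_trichotomy i j with hij | hij | hij
    · simp [hij, not_lt.mpr hij.le, h' i j]
    · subst hij
      have : A i i = -A i i := h' i i
      have : A i i = 0 := by linarith
      simp [this]
    · simp [hij, not_lt.mpr hij.le]
  have hupper : ∀ A : Matrix n n ℝ, (∀ i j, j < i → A i j = 0) → π A = 0 := by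
    intro A h
    ext i j
    rw [hπ']
    rcases lt_trichotomy i j with hij | hij | hij
    · simp [hij, not_lt.mpr hij.le, h j i hij]
    · subst hij; simp
    · simp [hij, not_lt.mpr hij.le, h i j hij]
  -- skew matrices closed under bracket
  have hskewbr : ∀ A B : Matrix n n ℝ, A.transpose = -A → B.transpose = -B →
      (⁅A, B⁆ : Matrix n n ℝ).transpose = -⁅A, B⁆ := by
    intro A B hA hB
    simp only [Ring.lie_def, Matrix.transpose_sub, Matrix.transpose_mul, hA, hB]
    noncomm_ring
  -- upper triangular matrices closed under bracket
  have hmulupper : ∀ A B : Matrix n n ℝ, (∀ i j, j < i → A i j = 0) →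
      (∀ i j, j < i → B i j = 0) → ∀ i j, j < i → (A * B) i j = 0 := by
    intro A B hA hB i j hji
    rw [Matrix.mul_apply]
    apply Finset.sum_eq_zero
    intro k _
    rcases lt_or_ge k i with hk | hk
    · rw [hA i k hk, zero_mul]
    · rw [hB k j (lt_of_lt_of_le hji hk), mul_zero]
  intro M N
  -- πM is skew
  have hskewπ : ∀ A : Matrix n n ℝ, (π A).transpose = -(π A) := by
    intro A
    rw [hπ]
    ext i j
    simp [Matrix.transpose_apply, Matrix.sub_apply]
  -- M − πM is upper triangular
  have hupperpart : ∀ A : Matrix n n ℝ, ∀ i j, j < i → (A - π A) i j = 0 := by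
    intro A i j hji
    simp [Matrix.sub_apply, hπ', hji, not_lt.mpr hji.le]
  have key : ⁅π M, N⁆ + ⁅M, π N⁆ =
      ⁅M, N⁆ + (⁅π M, π N⁆ - ⁅M - π M, N - π N⁆) := by
    simp only [Ring.lie_def, mul_sub, sub_mul]
    abel
  rw [key, hadd, hsub]
  have h1 : π ⁅π M, π N⁆ = ⁅π M, π N⁆ :=
    hskew _ (hskewbr _ _ (hskewπ M) (hskewπ N))
  have h2 : π ⁅M - π M, N - π N⁆ = 0 := by
    apply hupper
    intro i j hji
    simp only [Ring.lie_def, Matrix.sub_apply]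
    rw [hmulupper _ _ (hupperpart M) (hupperpart N) i j hji,
        hmulupper _ _ (hupperpart N) (hupperpart M) i j hji, sub_zero]
  rw [h1, h2]
  abel
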